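/- arXiv:2310.16455 — 2 statements merged into one kernel-verified Lean document; each statement's English description precedes it below -/
import Mathlib

section
/- For every s ∈ ℝ and x ∈ M, the function t ↦ ν_x^{s,t} from (s, ∞) to ℕ ∪ {∞} is nondecreasing and left-continuous. -/
open Set Filter

set_option linter.unusedSectionVars false

noncomputable section

variable {M : Type*} [MetricSpace M] [ProperSpace M] [TopologicalSpace.SeparableSpace M]

/-- The restriction of `f` to `[a, b]`, represented as the element
`t ↦ f(a ∨ (b ∧ t))` of `C(ℝ, M)`. -/
def truncPath (f : C(ℝ, M)) (a b : ℝ) : C(ℝ, M) :=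
  f.comp ⟨fun t => max a (min b t),
    continuous_const.max (continuous_const.min continuous_id)⟩

/-- The restriction of a path as an element of the path space (pair of a starting time and
its constant-before extension). -/
def restrictPath (f : C(ℝ, M)) (r : ℝ) : ℝ × C(ℝ, M) :=
  (r, f.comp ⟨fun t => max r t, continuous_const.max continuous_id⟩)

lemma truncPath_apply (f : C(ℝ, M)) (a b t : ℝ) :
    truncPath f a b t = f (max a (min b t)) := rfl

lemma continuous_truncPath (a b : ℝ) :
    Continuous (fun g : C(ℝ, M) => truncPath g a b) :=
  ContinuousMap.continuous_precomp _

lemma truncPath_truncPath (f : C(ℝ, M)) {a r t : ℝ} (har : a ≤ r) (hrt : r ≤ t) :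
    truncPath (truncPath f a t) a r = truncPath f a r := by
  ext y
  simp only [truncPath_apply]
  congr 1
  have h1 : max a (min r y) ≤ r := max_le har (min_le_left _ _)
  rw [min_eq_right (h1.trans hrt), max_eq_right (le_max_left _ _)]

lemma truncPath_comp_max (f : C(ℝ, M)) (a b : ℝ) :
    truncPath (f.comp ⟨fun t => max a t, continuous_const.max continuous_id⟩) a b
      = truncPath f a b := by
  ext y
  simp only [truncPath_apply, ContinuousMap.comp_apply, ContinuousMap.coe_mk]
  rw [max_eq_right (le_max_left _ _)]

lemma truncPath_of_le (f : C(ℝ, M)) {a b y : ℝ} (h : y ≤ a) :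
    truncPath f a b y = truncPath f a b a := by
  simp only [truncPath_apply]
  rw [max_eq_left ((min_le_right _ _).trans h), max_eq_left (min_le_right _ _)]

lemma truncPath_of_ge (f : C(ℝ, M)) {a b y : ℝ} (h : b ≤ y) :
    truncPath f a b y = truncPath f a b b := by
  simp only [truncPath_apply]
  rw [min_eq_left h, min_self]

lemma truncPath_of_mem (f : C(ℝ, M)) {a b y : ℝ} (hay : a ≤ y) (hyb : y ≤ b) :
    truncPath f a b y = f y := by
  simp only [truncPath_apply]
  rw [min_eq_right hyb, max_eq_right hay]

variable (s : ℕ → ℝ) (φ : ℕ → C(ℝ, M))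

/-- `K^{a,b}_{ε,x}`: the closure in `C([a,b] : M)` of the set of restrictions
`{φ_n[a,b] : n ∈ I^a, φ_n(a) ∈ B(x,ε)}`. -/
def Keps (a b : ℝ) (x : M) (ε : ℝ) : Set C(ℝ, M) :=
  closure {g | ∃ n, s n ≤ a ∧ dist (φ n a) x < ε ∧ g = truncPath (φ n) a b}

/-- `K^{a,b}_x = ⋂_{ε>0} K^{a,b}_{ε,x}`. -/
def Kx (a b : ℝ) (x : M) : Set C(ℝ, M) := ⋂ ε > (0 : ℝ), Keps s φ a b x ε

/-- `ν^{a,b}_x = #K^{a,b}_x ∈ ℕ ∪ {∞}`. -/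
def nu (a b : ℝ) (x : M) : ℕ∞ := (Kx s φ a b x).encard

def Sgen (a b : ℝ) (x : M) (ε : ℝ) : Set C(ℝ, M) :=
  {g | ∃ n, s n ≤ a ∧ dist (φ n a) x < ε ∧ g = truncPath (φ n) a b}

lemma Keps_eq (a b : ℝ) (x : M) (ε : ℝ) :
    Keps s φ a b x ε = closure (Sgen s φ a b x ε) := rfl

lemma Sgen_mono (a b : ℝ) (x : M) {ε ε' : ℝ} (h : ε ≤ ε') :
    Sgen s φ a b x ε ⊆ Sgen s φ a b x ε' := by
  rintro g ⟨n, hn, hd, rfl⟩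
  exact ⟨n, hn, lt_of_lt_of_le hd h, rfl⟩

lemma mem_Kx_iff {a b : ℝ} {x : M} {g : C(ℝ, M)} :
    g ∈ Kx s φ a b x ↔ ∀ ε > (0 : ℝ), g ∈ closure (Sgen s φ a b x ε) := by
  simp [Kx, Keps_eq]

lemma truncPath_mem_Kx {a r t : ℝ} (har : a ≤ r) (hrt : r ≤ t) {x : M} {g : C(ℝ, M)}
    (hg : g ∈ Kx s φ a t x) : truncPath g a r ∈ Kx s φ a r x := by
  rw [mem_Kx_iff] at hg ⊢
  intro ε hε
  refine map_mem_closure (f := fun g : C(ℝ, M) => truncPath g a r) (continuous_truncPath a r) (hg ε hε) ?_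
  rintro f ⟨n, hn, hd, rfl⟩
  exact ⟨n, hn, hd, (truncPath_truncPath (φ n) har hrt)⟩

lemma sgen_subset_compact
    (hSk3 : ∀ L : Set (ℝ × M), IsCompact L →
      IsCompact (closure {p : ℝ × C(ℝ, M) | ∃ n r, s n ≤ r ∧ (r, φ n r) ∈ L ∧
        p = restrictPath (φ n) r}))
    (a u : ℝ) (x : M) :
    ∃ Q : Set C(ℝ, M), IsCompact Q ∧ ∀ ε ≤ (1 : ℝ), Sgen s φ a u x ε ⊆ Q := by
  have hL : IsCompact (({a} : Set ℝ) ×ˢ Metric.closedBall x 1) :=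
    isCompact_singleton.prod (isCompact_closedBall x 1)
  have hQ0 := hSk3 _ hL
  refine ⟨(fun g => truncPath g a u) '' (Prod.snd ''
      closure {p : ℝ × C(ℝ, M) | ∃ n r, s n ≤ r ∧
        (r, φ n r) ∈ ({a} : Set ℝ) ×ˢ Metric.closedBall x 1 ∧ p = restrictPath (φ n) r}),
    (hQ0.image continuous_snd).image (continuous_truncPath a u), ?_⟩
  rintro ε hε g ⟨n, hn, hd, rfl⟩
  refine ⟨(φ n).comp ⟨fun t => max a t, continuous_const.max continuous_id⟩,
    ⟨restrictPath (φ n) a, subset_closure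
      ⟨n, a, hn, ⟨rfl, Metric.mem_closedBall.2 (hd.le.trans hε)⟩, rfl⟩, rfl⟩,
    truncPath_comp_max (φ n) a u⟩

lemma exists_trunc_preimage
    (hSk3 : ∀ L : Set (ℝ × M), IsCompact L →
      IsCompact (closure {p : ℝ × C(ℝ, M) | ∃ n r, s n ≤ r ∧ (r, φ n r) ∈ L ∧
        p = restrictPath (φ n) r}))
    {a t u : ℝ} (hat : a ≤ t) (htu : t ≤ u) {x : M} {h : C(ℝ, M)}
    (hh : h ∈ Kx s φ a t x) :
    ∃ g ∈ Kx s φ a u x, truncPath g a t = h := by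
  obtain ⟨Q, hQc, hQ⟩ := sgen_subset_compact s φ hSk3 a u x
  set ρ : C(ℝ, M) → C(ℝ, M) := fun g => truncPath g a t with hρ
  have hρc : Continuous ρ := continuous_truncPath a t
  set C : Ioc (0 : ℝ) 1 → Set C(ℝ, M) :=
    fun ε => closure (Sgen s φ a u x ε) ∩ ρ ⁻¹' {h} with hC
  have hclosed : ∀ ε, IsClosed (C ε) := fun ε =>
    isClosed_closure.inter (isClosed_singleton.preimage hρc)
  have hsub : ∀ ε, C ε ⊆ Q := fun ε =>
    inter_subset_left.trans (closure_minimal (hQ ε ε.2.2) hQc.isClosed)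
  have hcomp : ∀ ε, IsCompact (C ε) := fun ε =>
    hQc.of_isClosed_subset (hclosed ε) (hsub ε)
  have hne : ∀ ε, (C ε).Nonempty := by
    rintro ⟨ε, hε0, hε1⟩
    have hDc : IsCompact (closure (Sgen s φ a u x ε)) :=
      hQc.of_isClosed_subset isClosed_closure (closure_minimal (hQ ε hε1) hQc.isClosed)
    have himage : closure (Sgen s φ a t x ε) ⊆ ρ '' closure (Sgen s φ a u x ε) := by
      apply closure_minimal _ (hDc.image hρc).isClosed
      rintro g ⟨n, hn, hd, rfl⟩
      exact ⟨truncPath (φ n) a u, subset_closure ⟨n, hn, hd, rfl⟩,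
        truncPath_truncPath (φ n) hat htu⟩
    obtain ⟨g, hg, hgh⟩ := himage ((mem_Kx_iff s φ).1 hh ε hε0)
    exact ⟨g, hg, by simp [hgh]⟩
  have hmono : ∀ ε ε' : Ioc (0 : ℝ) 1, (ε : ℝ) ≤ ε' → C ε ⊆ C ε' :=
    fun ε ε' hle => inter_subset_inter_left _ (closure_mono (Sgen_mono s φ a u x hle))
  have hdir : Directed (· ⊇ ·) C := by
    intro ε ε'
    refine ⟨⟨min ε ε', lt_min ε.2.1 ε'.2.1, (min_le_left _ _).trans ε.2.2⟩,
      hmono _ _ (min_le_left _ _), hmono _ _ (min_le_right _ _)⟩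
  have : Nonempty (Ioc (0 : ℝ) 1) := ⟨⟨1, by norm_num⟩⟩
  obtain ⟨g, hg⟩ := IsCompact.nonempty_iInter_of_directed_nonempty_isCompact_isClosed
    C hdir hne hcomp hclosed
  simp only [mem_iInter] at hg
  have hmem : ∀ ε : Ioc (0 : ℝ) 1, g ∈ closure (Sgen s φ a u x ε) ∧ ρ g = h := by
    intro ε
    exact ⟨(hg ε).1, (hg ε).2⟩
  refine ⟨g, (mem_Kx_iff s φ).2 fun ε hε0 => ?_, (hmem ⟨1, by norm_num⟩).2⟩
  rcases le_total ε 1 with hε1 | hε1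
  · exact (hmem ⟨ε, hε0, hε1⟩).1
  · exact closure_mono (Sgen_mono s φ a u x hε1) (hmem ⟨1, by norm_num⟩).1


lemma keps_const {a t : ℝ} {x : M} {ε : ℝ} {g : C(ℝ, M)} (hg : g ∈ Keps s φ a t x ε) :
    (∀ y, t ≤ y → g y = g t) ∧ (∀ y, y ≤ a → g y = g a) := by
  have h1 : IsClosed {g : C(ℝ, M) | ∀ y, t ≤ y → g y = g t} := by
    have : {g : C(ℝ, M) | ∀ y, t ≤ y → g y = g t}
        = ⋂ y, ⋂ _ : t ≤ y, {g : C(ℝ, M) | g y = g t} := by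
      ext g; simp
    rw [this]
    exact isClosed_iInter fun y => isClosed_iInter fun _ =>
      isClosed_eq (continuous_eval_const y) (continuous_eval_const t)
  have h2 : IsClosed {g : C(ℝ, M) | ∀ y, y ≤ a → g y = g a} := by
    have : {g : C(ℝ, M) | ∀ y, y ≤ a → g y = g a}
        = ⋂ y, ⋂ _ : y ≤ a, {g : C(ℝ, M) | g y = g a} := by
      ext g; simp
    rw [this]
    exact isClosed_iInter fun y => isClosed_iInter fun _ =>
      isClosed_eq (continuous_eval_const y) (continuous_eval_const a)
  have : Keps s φ a t x ε ⊆ {g : C(ℝ, M) | (∀ y, t ≤ y → g y = g t) ∧ ∀ y, y ≤ a → g y = g a} := by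
    rw [Keps_eq]
    refine closure_minimal ?_ (h1.inter h2)
    rintro f ⟨n, hn, hd, rfl⟩
    exact ⟨fun y hy => truncPath_of_ge (φ n) hy, fun y hy => truncPath_of_le (φ n) hy⟩
  exact this hg

lemma eq_of_forall_trunc_eq {a t : ℝ} (hat : a < t) {x : M} {g h : C(ℝ, M)}
    (hg : g ∈ Kx s φ a t x) (hh : h ∈ Kx s φ a t x)
    (heq : ∀ r ∈ Ioo a t, truncPath g a r = truncPath h a r) : g = h := by
  have hg1 : g ∈ Keps s φ a t x 1 := by
    rw [Keps_eq]; exact (mem_Kx_iff s φ).1 hg 1 one_pos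
  have hh1 : h ∈ Keps s φ a t x 1 := by
    rw [Keps_eq]; exact (mem_Kx_iff s φ).1 hh 1 one_pos
  obtain ⟨hgt, hga⟩ := keps_const s φ hg1
  obtain ⟨hht, hha⟩ := keps_const s φ hh1
  have hIco : Set.EqOn (⇑g) (⇑h) (Ico a t) := by
    rintro y ⟨hay, hyt⟩
    set r := (y + t) / 2 with hr
    have h1 : a < r := by rw [hr]; linarith
    have h2 : r < t := by rw [hr]; linarith
    have h3 : y ≤ r := by rw [hr]; linarith
    have := congrFun (congrArg DFunLike.coe (heq r ⟨h1, h2⟩)) y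
    simpa [truncPath_of_mem g hay h3, truncPath_of_mem h hay h3] using this
  have hIcc : Set.EqOn (⇑g) (⇑h) (Icc a t) := by
    have := hIco.closure g.continuous h.continuous
    rwa [closure_Ico hat.ne] at this
  ext y
  rcases le_total y a with hy | hy
  · rw [hga y hy, hha y hy]
    exact hIcc ⟨le_refl a, hat.le⟩
  · rcases le_total y t with hy2 | hy2
    · exact hIcc ⟨hy, hy2⟩
    · rw [hgt y hy2, hht y hy2]
      exact hIcc ⟨hat.le, le_refl t⟩

lemma exists_injOn_trunc {a t : ℝ} (hat : a < t) {x : M} {F : Set C(ℝ, M)}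
    (hFfin : F.Finite) (hFsub : F ⊆ Kx s φ a t x) :
    ∃ r ∈ Ioo a t, Set.InjOn (fun g => truncPath g a r) F := by
  classical
  set c : C(ℝ, M) × C(ℝ, M) → ℝ := fun p =>
    if hp : ∃ r ∈ Ioo a t, truncPath p.1 a r ≠ truncPath p.2 a r then hp.choose
    else (a + t) / 2 with hc
  have hmid : (a + t) / 2 ∈ Ioo a t := ⟨by linarith, by linarith⟩
  have hcmem : ∀ p, c p ∈ Ioo a t := by
    intro p
    by_cases hp : ∃ r ∈ Ioo a t, truncPath p.1 a r ≠ truncPath p.2 a r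
    · simp only [hc, dif_pos hp]; exact hp.choose_spec.1
    · simp only [hc, dif_neg hp]; exact hmid
  have hcspec : ∀ p : C(ℝ, M) × C(ℝ, M),
      (∃ r ∈ Ioo a t, truncPath p.1 a r ≠ truncPath p.2 a r) →
      truncPath p.1 a (c p) ≠ truncPath p.2 a (c p) := by
    intro p hp
    simp only [hc, dif_pos hp]
    exact hp.choose_spec.2
  set G : Set ℝ := insert ((a + t) / 2) (c '' (F ×ˢ F)) with hG
  have hGfin : G.Finite := ((hFfin.prod hFfin).image c).insert _
  have hGne : G.Nonempty := ⟨_, mem_insert _ _⟩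
  have hGsub : G ⊆ Ioo a t := by
    rintro b hb
    rcases hb with rfl | ⟨p, _, rfl⟩
    · exact hmid
    · exact hcmem p
  obtain ⟨r, hrG, hrmax⟩ := Set.Finite.exists_maximalFor id G hGfin hGne
  have hrmax' : ∀ b ∈ G, b ≤ r := by
    intro b hb
    by_contra hlt
    push_neg at hlt
    exact absurd (hrmax hb hlt.le) (not_le.mpr hlt)
  refine ⟨r, hGsub hrG, ?_⟩
  intro g hgF h hhF hE
  by_contra hne
  have hE' : truncPath g a r = truncPath h a r := hE
  have hex : ∃ r ∈ Ioo a t, truncPath g a r ≠ truncPath h a r := by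
    by_contra hno
    push_neg at hno
    exact hne (eq_of_forall_trunc_eq s φ hat (hFsub hgF) (hFsub hhF) hno)
  have hneq := hcspec (g, h) hex
  obtain ⟨y, hy⟩ : ∃ y, truncPath g a (c (g, h)) y ≠ truncPath h a (c (g, h)) y := by
    by_contra hno; push_neg at hno; exact hneq (ContinuousMap.ext hno)
  set z := max a (min (c (g, h)) y) with hz
  have hz1 : a ≤ z := le_max_left _ _
  have hz2 : z ≤ c (g, h) := max_le (hcmem (g, h)).1.le (min_le_left _ _)
  have hzr : z ≤ r := hz2.trans (hrmax' _ (mem_insert_of_mem _ ⟨(g, h), mk_mem_prod hgF hhF, rfl⟩))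
  have hgz : g z ≠ h z := hy
  have := congrFun (congrArg DFunLike.coe hE') z
  rw [truncPath_of_mem g hz1 hzr, truncPath_of_mem h hz1 hzr] at this
  exact hgz this

/-- For a skeleton `φ` and every `(a, x)`, the map `t ↦ ν^{a,t}_x` is nondecreasing and
left-continuous on `(a, ∞)` (left-continuity being expressed, by monotonicity, as
`ν^{a,t}_x = ⨆_{a<r<t} ν^{a,r}_x`). -/
theorem nu_monotone_leftContinuous
    (hconst : ∀ n, ∀ t ≤ s n, φ n t = φ n (s n))
    (hSk1 : ∀ m n r, s m ≤ r → s n ≤ r → φ m r = φ n r → ∀ t, r ≤ t → φ m t = φ n t)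
    (hSk2 : Dense {q : ℝ × M | ∃ n, q = (s n, φ n (s n))})
    (hSk3 : ∀ L : Set (ℝ × M), IsCompact L →
      IsCompact (closure {p : ℝ × C(ℝ, M) | ∃ n r, s n ≤ r ∧ (r, φ n r) ∈ L ∧
        p = restrictPath (φ n) r})) :
    ∀ (a : ℝ) (x : M),
      (∀ t u : ℝ, a < t → t ≤ u → nu s φ a t x ≤ nu s φ a u x) ∧
      (∀ t : ℝ, a < t → nu s φ a t x = ⨆ r ∈ Set.Ioo a t, nu s φ a r x) := by
  intro a x
  have mono : ∀ t u : ℝ, a < t → t ≤ u → nu s φ a t x ≤ nu s φ a u x := by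
    intro t u hat htu
    have hsub : Kx s φ a t x ⊆ (fun g => truncPath g a t) '' Kx s φ a u x := by
      intro h hh
      obtain ⟨g, hg, hgt⟩ := exists_trunc_preimage s φ hSk3 hat.le htu hh
      exact ⟨g, hg, hgt⟩
    calc nu s φ a t x ≤ ((fun g => truncPath g a t) '' Kx s φ a u x).encard :=
          Set.encard_le_encard hsub
      _ ≤ nu s φ a u x := Set.encard_image_le _ _
  refine ⟨mono, fun t hat => ?_⟩
  set S := ⨆ r ∈ Set.Ioo a t, nu s φ a r x with hS
  have key : ∀ n : ℕ, (n : ℕ∞) ≤ nu s φ a t x → (n : ℕ∞) ≤ S := by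
    intro n hn
    obtain ⟨F, hFsub, hFcard⟩ := Set.exists_subset_encard_eq hn
    have hFfin : F.Finite := Set.finite_of_encard_eq_coe hFcard
    obtain ⟨r, hr, hinj⟩ := exists_injOn_trunc s φ hat hFfin hFsub
    have himg : (fun g => truncPath g a r) '' F ⊆ Kx s φ a r x := by
      rintro _ ⟨g, hgF, rfl⟩
      exact truncPath_mem_Kx s φ hr.1.le hr.2.le (hFsub hgF)
    have hle : (n : ℕ∞) ≤ nu s φ a r x := by
      rw [← hFcard, ← hinj.encard_image]
      exact Set.encard_le_encard himg
    exact hle.trans (le_iSup₂ (f := fun r _ => nu s φ a r x) r hr)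
  refine le_antisymm ?_ (iSup₂_le fun r hr => mono r t hr.1 hr.2.le)
  by_contra hcon
  push_neg at hcon
  obtain ⟨m, hm0⟩ := WithTop.ne_top_iff_exists.1 (ne_top_of_lt hcon)
  have hm : (m : ℕ∞) = S := by exact_mod_cast hm0
  have h1 : ((m + 1 : ℕ) : ℕ∞) ≤ nu s φ a t x := by
    have hmlt : (m : ℕ∞) < nu s φ a t x := by rw [hm]; exact hcon
    rw [Nat.cast_add, Nat.cast_one]
    exact (ENat.add_one_le_iff (by simp)).2 hmlt
  have h2 := key (m + 1) h1
  rw [← hm] at h2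
  exact absurd (Nat.cast_le.mp h2) (by omega)

end
end

section
/- Let τ^s_x = inf{t > s : ν^{s,t}_x ≥ 2} and B(φ) = {(s,x) : τ^s_x = s} the set of bifurcation points. If τ^s_x < ∞, then (τ^s_x, θ_{s,τ^s_x}(x)) ∈ B(φ), i.e. the flow extension hits a bifurcation point at time τ^s_x. -/
open Set Filter

set_option linter.unusedSectionVars false

noncomputable section

variable {M : Type*} [MetricSpace M] [ProperSpace M] [TopologicalSpace.SeparableSpace M]

variable (s : ℕ → ℝ) (φ : ℕ → C(ℝ, M))

/-- The set `{t > a : ν^{a,t}_x ≥ 2}`, whose infimum is `τ^a_x`. -/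
def bifSet (a : ℝ) (x : M) : Set ℝ := {t | a < t ∧ 2 ≤ nu s φ a t x}

/-- The set of bifurcation points `B(φ) = {(a,x) : τ^a_x = a}`. -/
def bifPoints : Set (ℝ × M) :=
  {q | (bifSet s φ q.1 q.2).Nonempty ∧ sInf (bifSet s φ q.1 q.2) = q.1}

/-! ### Auxiliary lemmas -/

private lemma clamp_clamp {a b a' b' : ℝ} (h1 : a ≤ a') (h2 : b' ≤ b) (h3 : a' ≤ b)
    (v : ℝ) : max a (min b (max a' (min b' v))) = max a' (min b' v) := by
  rw [min_eq_right, max_eq_right]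
  · exact le_trans h1 (le_max_left _ _)
  · exact max_le h3 (le_trans (min_le_left _ _) h2)

private lemma trunc_trunc (f : C(ℝ, M)) {a b a' b' : ℝ} (h1 : a ≤ a') (h2 : b' ≤ b)
    (h3 : a' ≤ b) : truncPath (truncPath f a b) a' b' = truncPath f a' b' := by
  ext v
  show f (max a (min b (max a' (min b' v)))) = f (max a' (min b' v))
  rw [clamp_clamp h1 h2 h3]

private lemma continuous_trunc (a b : ℝ) : Continuous (fun f : C(ℝ, M) => truncPath f a b) :=
  ContinuousMap.continuous_precomp _

/-- Truncation maps `K^{a,b}_x` into `K^{a,u}_x` for `a < u ≤ b`. -/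
private lemma Kx_trunc {a u b : ℝ} {x : M} (hau : a ≤ u) (hub : u ≤ b) {g : C(ℝ, M)}
    (hg : g ∈ Kx s φ a b x) : truncPath g a u ∈ Kx s φ a u x := by
  refine mem_iInter₂.2 fun ε hε => ?_
  have hg' : g ∈ Keps s φ a b x ε := mem_iInter₂.1 hg ε hε
  rw [Keps] at hg' ⊢
  refine map_mem_closure (f := fun f : C(ℝ, M) => truncPath f a u)
    (continuous_trunc a u) hg' ?_
  rintro f ⟨n, hn1, hn2, rfl⟩
  exact ⟨n, hn1, hn2, trunc_trunc (φ n) le_rfl hub (hau.trans hub)⟩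

/-- Every element of `K^{a,b}_x` is fixed by truncation to `[a,b]`. -/
private lemma Kx_trunc_eq {a b : ℝ} {x : M} (hab : a ≤ b) {g : C(ℝ, M)}
    (hg : g ∈ Kx s φ a b x) : truncPath g a b = g := by
  have hcl : IsClosed {f : C(ℝ, M) | truncPath f a b = f} :=
    isClosed_eq (continuous_trunc a b) continuous_id
  have hg1 : g ∈ Keps s φ a b x 1 := mem_iInter₂.1 hg 1 one_pos
  refine closure_minimal ?_ hcl hg1
  rintro f ⟨n, hn1, hn2, rfl⟩
  exact trunc_trunc (φ n) le_rfl le_rfl hab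

/-- **Hitting a bifurcation point.** Let `φ` be a skeleton and let `θ` be the associated
extension family (`θ_{a,·}(x)` continuous starting at `x`, whose restriction to `[a,b]`
belongs to `K^{a,b}_x`).  If `τ^a_x < ∞` (the set `{t > a : ν^{a,t}_x ≥ 2}` is nonempty),
then `(τ^a_x, θ_{a,τ^a_x}(x))` is a bifurcation point of `φ`. -/
theorem hits_bifurcation_point
    (hconst : ∀ n, ∀ t ≤ s n, φ n t = φ n (s n))
    (hSk1 : ∀ m n r, s m ≤ r → s n ≤ r → φ m r = φ n r → ∀ t, r ≤ t → φ m t = φ n t)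
    (hSk2 : Dense {q : ℝ × M | ∃ n, q = (s n, φ n (s n))})
    (hSk3 : ∀ L : Set (ℝ × M), IsCompact L →
      IsCompact (closure {p : ℝ × C(ℝ, M) | ∃ n r, s n ≤ r ∧ (r, φ n r) ∈ L ∧
        p = restrictPath (φ n) r}))
    (θ : ℝ → M → ℝ → M)
    (hθcont : ∀ a x, Continuous (θ a x))
    (hθstart : ∀ a x, θ a x a = x)
    (hθK : ∀ (a : ℝ) (x : M) (b : ℝ), a < b →
      (⟨fun t => θ a x (max a (min b t)),
        (hθcont a x).comp
          (continuous_const.max (continuous_const.min continuous_id))⟩ : C(ℝ, M))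
        ∈ Kx s φ a b x) :
    ∀ (a : ℝ) (x : M), (bifSet s φ a x).Nonempty →
      (sInf (bifSet s φ a x), θ a x (sInf (bifSet s φ a x))) ∈ bifPoints s φ := by
  intro a x hne
  set τ := sInf (bifSet s φ a x) with hτdef
  have hbdd : BddBelow (bifSet s φ a x) := ⟨a, fun t ht => ht.1.le⟩
  have haτ : a ≤ τ := le_csInf hne fun t ht => ht.1.le
  simp only [bifPoints, mem_setOf_eq]
  rcases eq_or_lt_of_le haτ with heq | hlt
  · -- degenerate case `τ = a`
    rw [← heq, hθstart]
    exact ⟨hne, heq.symm⟩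
  · -- main case `a < τ`
    set y := θ a x τ with hydef
    -- `K^{a,u}_x` is a subsingleton for `a < u < τ`
    have hsub : ∀ u, a < u → u < τ → (Kx s φ a u x).Subsingleton := by
      intro u h1 h2
      have hnot : ¬(2 ≤ nu s φ a u x) := fun h =>
        absurd (csInf_le hbdd ⟨h1, h⟩) (not_le.2 h2)
      have hle1 : nu s φ a u x ≤ 1 := by
        have hlt2 : nu s φ a u x < 2 := lt_of_not_ge hnot
        rw [show (2 : ℕ∞) = 1 + 1 from rfl] at hlt2
        exact (ENat.lt_add_one_iff (by simp)).1 hlt2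
      intro g₁ h₁ g₂ h₂
      exact Set.encard_le_one_iff.1 hle1 g₁ g₂ h₁ h₂
    -- every element of `K^{a,b}_x` (`b ≥ τ`) agrees with `θ` on `[a, τ]`
    have hagree : ∀ b, τ ≤ b → ∀ g ∈ Kx s φ a b x, ∀ v ∈ Icc a τ, g v = θ a x v := by
      intro b hb g hg v hv
      have h1 : ∀ v ∈ Ico a τ, g v = θ a x v := by
        intro v hv
        obtain ⟨u, hu1, hu2⟩ := exists_between hv.2
        have hu0 : a < u := lt_of_le_of_lt hv.1 hu1
        have hmem : truncPath g a u ∈ Kx s φ a u x :=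
          Kx_trunc s φ hu0.le (le_trans hu2.le hb) hg
        have heq := hsub u hu0 hu2 hmem (hθK a x u hu0)
        have hev : g (max a (min u v)) = θ a x (max a (min u v)) :=
          congrFun (congrArg DFunLike.coe heq) v
        rwa [min_eq_right hu1.le, max_eq_right hv.1] at hev
      have hcl : IsClosed {v | g v = θ a x v} := isClosed_eq g.continuous (hθcont a x)
      have hsubset : Icc a τ ⊆ {v | g v = θ a x v} := by
        rw [← closure_Ico hlt.ne]
        exact closure_minimal h1 hcl
      exact hsubset hv
    -- `τ` itself is not in `bifSet a x`
    have hτnot : τ ∉ bifSet s φ a x := by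
      intro hmem
      have hss : (Kx s φ a τ x).Subsingleton := by
        intro g₁ h₁ g₂ h₂
        have e₁ := Kx_trunc_eq s φ haτ h₁
        have e₂ := Kx_trunc_eq s φ haτ h₂
        ext v
        have hv1 : g₁ (max a (min τ v)) = g₁ v := congrFun (congrArg DFunLike.coe e₁) v
        have hv2 : g₂ (max a (min τ v)) = g₂ v := congrFun (congrArg DFunLike.coe e₂) v
        have hw : max a (min τ v) ∈ Icc a τ :=
          ⟨le_max_left _ _, max_le haτ (min_le_left _ _)⟩
        rw [← hv1, ← hv2, hagree τ le_rfl g₁ h₁ _ hw, hagree τ le_rfl g₂ h₂ _ hw]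
      have h1 : nu s φ a τ x ≤ 1 := Set.encard_le_one_iff.2 fun a b ha hb => hss ha hb
      exact absurd (le_trans hmem.2 h1) (by norm_num)
    -- key claim: `bifSet τ y` accumulates at `τ`
    have key : ∀ t, τ < t → ∃ t', t' ∈ bifSet s φ τ y ∧ t' < t := by
      intro t ht
      obtain ⟨t', ht'mem, ht'lt⟩ := exists_lt_of_csInf_lt hne ht
      have hτt' : τ < t' :=
        lt_of_le_of_ne (csInf_le hbdd ht'mem) (fun h => hτnot (h ▸ ht'mem))
      have hat' : a ≤ t' := haτ.trans hτt'.le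
      have h2 : 2 ≤ nu s φ a t' x := ht'mem.2
      obtain ⟨g₁, g₂, hg₁, hg₂, hne12⟩ :=
        Set.one_lt_encard_iff.1 (lt_of_lt_of_le (by norm_num : (1:ℕ∞) < 2) h2)
      -- push the two elements forward to `K^{τ,t'}_y`
      have hTmem : ∀ g ∈ Kx s φ a t' x, truncPath g τ t' ∈ Kx s φ τ t' y := by
        intro g hg
        have hgτ : g τ = y := hagree t' hτt'.le g hg τ ⟨haτ, le_rfl⟩
        refine mem_iInter₂.2 fun ε hε => ?_
        rw [Keps, mem_closure_iff]
        intro U hUopen hUmem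
        have hg1 : g ∈ Keps s φ a t' x 1 := mem_iInter₂.1 hg 1 one_pos
        rw [Keps, mem_closure_iff] at hg1
        have hWopen : IsOpen ((fun f : C(ℝ, M) => truncPath f τ t') ⁻¹' U ∩
            (fun f : C(ℝ, M) => f τ) ⁻¹' Metric.ball y ε) :=
          (hUopen.preimage (continuous_trunc τ t')).inter
            (Metric.isOpen_ball.preimage (continuous_eval_const τ))
        have hWmem : g ∈ (fun f : C(ℝ, M) => truncPath f τ t') ⁻¹' U ∩
            (fun f : C(ℝ, M) => f τ) ⁻¹' Metric.ball y ε := by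
          refine ⟨hUmem, ?_⟩
          simp only [mem_preimage, Metric.mem_ball, hgτ]
          simpa using hε
        obtain ⟨f, hfW, n, hn1, _, rfl⟩ := hg1 _ hWopen hWmem
        refine ⟨truncPath (φ n) τ t', ?_, n, hn1.trans haτ, ?_, rfl⟩
        · have hTf : truncPath (truncPath (φ n) a t') τ t' = truncPath (φ n) τ t' :=
            trunc_trunc (φ n) haτ le_rfl hτt'.le
          rw [← hTf]
          exact hfW.1
        · have hfτ : truncPath (φ n) a t' τ = φ n τ := by
            show φ n (max a (min t' τ)) = φ n τ
            rw [min_eq_right hτt'.le, max_eq_right haτ]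
          have := hfW.2
          rwa [mem_preimage, Metric.mem_ball, hfτ] at this
      -- the two pushed-forward elements are distinct
      have hTne : truncPath g₁ τ t' ≠ truncPath g₂ τ t' := by
        intro hTeq
        apply hne12
        have e₁ := Kx_trunc_eq s φ hat' hg₁
        have e₂ := Kx_trunc_eq s φ hat' hg₂
        ext v
        have hv1 : g₁ (max a (min t' v)) = g₁ v := congrFun (congrArg DFunLike.coe e₁) v
        have hv2 : g₂ (max a (min t' v)) = g₂ v := congrFun (congrArg DFunLike.coe e₂) v
        set w := max a (min t' v) with hwdef
        rw [← hv1, ← hv2]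
        by_cases hw : w ≤ τ
        · have hwmem : w ∈ Icc a τ := ⟨le_max_left _ _, hw⟩
          rw [hagree t' hτt'.le g₁ hg₁ w hwmem, hagree t' hτt'.le g₂ hg₂ w hwmem]
        · have hwt : w ≤ t' := max_le hat' (min_le_left _ _)
          have h1 : g₁ (max τ (min t' w)) = g₂ (max τ (min t' w)) :=
            congrFun (congrArg DFunLike.coe hTeq) w
          rwa [min_eq_right hwt, max_eq_right (le_of_not_ge hw)] at h1
      refine ⟨t', ⟨hτt', ?_⟩, ht'lt⟩
      have h1lt : 1 < nu s φ τ t' y :=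
        Set.one_lt_encard_iff.2
          ⟨truncPath g₁ τ t', truncPath g₂ τ t', hTmem g₁ hg₁, hTmem g₂ hg₂, hTne⟩
      rw [show (2 : ℕ∞) = 1 + 1 from rfl]
      exact (ENat.add_one_le_iff (by simp)).2 h1lt
    obtain ⟨t₀, ht₀, _⟩ := key (τ + 1) (lt_add_one τ)
    have hbdd' : BddBelow (bifSet s φ τ y) := ⟨τ, fun t ht => ht.1.le⟩
    refine ⟨⟨t₀, ht₀⟩, le_antisymm ?_ (le_csInf ⟨t₀, ht₀⟩ fun t ht => ht.1.le)⟩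
    by_contra hgt
    push_neg at hgt
    obtain ⟨t', ht', hlt'⟩ := key _ hgt
    exact absurd (csInf_le hbdd' ht') (not_le.2 hlt')

end
end
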